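/- Let B_x be a closed Euclidean ball in ℝ^d centered at the origin with positive radius, and define J̃_p(θ) = sup_{x ∈ B_x} ψ^o(θ, x). Then: (i) for each θ ∈ ℝ^d there is a unique maximizer x̃(θ) of ψ^o(θ, ·) over B_x that lies in span{φ(S)}, and every maximizer x̂ of ψ^o(θ, ·) over B_x satisfies Φx̂ = Φx̃(θ); (ii) J̃_p is convex and differentiable on ℝ^d with ∇J̃_p(θ) = ∇_θψ^o(θ, x̃(θ)) = (ΦᵀΞ(P^{(λ)} − I)Φ)ᵀ x̃(θ) + ∇p(θ); (iii) the map θ ↦ x̃(θ) is continuous. -/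

import Mathlib

open Matrix RealInnerProductSpace

/-- The canonical identification of `ℝ^d` (as a plain function type) with
`EuclideanSpace ℝ (Fin d)`. -/
noncomputable def toEuc {d : ℕ} (v : Fin d → ℝ) : EuclideanSpace ℝ (Fin d) :=
  (WithLp.equiv 2 (Fin d → ℝ)).symm v

section stmt11aux
variable {n d : ℕ}

private lemma toEuc_coe (v : Fin d → ℝ) : (toEuc v : Fin d → ℝ) = v := rfl

private lemma inner_eq_dot (x y : EuclideanSpace ℝ (Fin d)) :
    ⟪x, y⟫ = (x : Fin d → ℝ) ⬝ᵥ y := by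
  simp [PiLp.inner_apply, dotProduct, mul_comm]

private lemma dot_mulVec_left (Φ : Matrix (Fin n) (Fin d) ℝ) (x : Fin d → ℝ) (w : Fin n → ℝ) :
    Φ.mulVec x ⬝ᵥ w = x ⬝ᵥ Φᵀ.mulVec w := by
  rw [Matrix.dotProduct_mulVec, Matrix.vecMul_transpose]

private lemma dot_mulVec_right (M : Matrix (Fin d) (Fin d) ℝ) (x y : Fin d → ℝ) :
    x ⬝ᵥ M.mulVec y = Mᵀ.mulVec x ⬝ᵥ y := by
  rw [Matrix.dotProduct_mulVec, Matrix.mulVec_transpose]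

private lemma tmul_mem_span (Φ : Matrix (Fin n) (Fin d) ℝ) (w : Fin n → ℝ) :
    Φᵀ.mulVec w ∈ Submodule.span ℝ (Set.range (fun i : Fin n => Φ i)) := by
  rw [Matrix.mulVec_transpose]
  have : w ᵥ* Φ = ∑ i, w i • Φ i := by
    ext j; simp [Matrix.vecMul, dotProduct, Finset.sum_apply]
  rw [this]
  exact Submodule.sum_mem _ (fun i _ => Submodule.smul_mem _ _ (Submodule.subset_span ⟨i, rfl⟩))

private lemma mulVec_apply_eq_inner (Φ : Matrix (Fin n) (Fin d) ℝ)
    (x : EuclideanSpace ℝ (Fin d)) (i : Fin n) : Φ.mulVec x i = ⟪toEuc (Φ i), x⟫ := by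
  rw [inner_eq_dot]; rfl

private lemma mulVec_add' (Φ : Matrix (Fin n) (Fin d) ℝ) (x y : EuclideanSpace ℝ (Fin d)) :
    Φ.mulVec ((x + y : EuclideanSpace ℝ (Fin d)) : Fin d → ℝ) = Φ.mulVec x + Φ.mulVec y :=
  Matrix.mulVec_add Φ x y

private lemma mulVec_smul' (Φ : Matrix (Fin n) (Fin d) ℝ) (c : ℝ) (x : EuclideanSpace ℝ (Fin d)) :
    Φ.mulVec ((c • x : EuclideanSpace ℝ (Fin d)) : Fin d → ℝ) = c • Φ.mulVec x :=
  Matrix.mulVec_smul Φ c x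

private lemma mulVec_sub' (Φ : Matrix (Fin n) (Fin d) ℝ) (x y : EuclideanSpace ℝ (Fin d)) :
    Φ.mulVec ((x - y : EuclideanSpace ℝ (Fin d)) : Fin d → ℝ) = Φ.mulVec x - Φ.mulVec y :=
  Matrix.mulVec_sub Φ (x : Fin d → ℝ) (y : Fin d → ℝ)

private lemma toEuc_sub (u v : Fin d → ℝ) :
    (toEuc u - toEuc v : EuclideanSpace ℝ (Fin d)) = toEuc (u - v) := rfl

private lemma exists_mulVec_bound (M : Matrix (Fin n) (Fin d) ℝ) :
    ∃ K : ℝ, 0 ≤ K ∧ ∀ x y : EuclideanSpace ℝ (Fin d),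
      ‖(toEuc (M.mulVec x) - toEuc (M.mulVec y) : EuclideanSpace ℝ (Fin n))‖ ≤ K * ‖x - y‖ := by
  let L : EuclideanSpace ℝ (Fin d) →L[ℝ] EuclideanSpace ℝ (Fin n) :=
    LinearMap.toContinuousLinearMap (Matrix.toEuclideanLin M)
  refine ⟨‖L‖, norm_nonneg _, fun x y => ?_⟩
  have h1 : ∀ z : EuclideanSpace ℝ (Fin d), L z = toEuc (M.mulVec z) := by
    intro z
    simp [L, Matrix.toEuclideanLin_apply, toEuc]
  calc ‖(toEuc (M.mulVec x) - toEuc (M.mulVec y) : EuclideanSpace ℝ (Fin n))‖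
      = ‖L x - L y‖ := by rw [h1, h1]
    _ = ‖L (x - y)‖ := by rw [map_sub]
    _ ≤ ‖L‖ * ‖x - y‖ := L.le_opNorm _

end stmt11aux

set_option maxHeartbeats 1000000 in
/-- With `B_x` a closed Euclidean ball centered at the origin of positive
radius and `J̃_p(θ) = sup_{x ∈ B_x} ψ^o(θ,x)`: (i) for each `θ` there is a unique maximizer
`x̃(θ)` of `ψ^o(θ,·)` over `B_x` lying in `span{φ(S)}`, and every maximizer `x̂` satisfies
`Φx̂ = Φx̃(θ)`; (ii) `J̃_p` is convex and differentiable with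
`∇J̃_p(θ) = (ΦᵀΞ(P−I)Φ)ᵀ x̃(θ) + ∇p(θ)`; (iii) `θ ↦ x̃(θ)` is continuous. -/
theorem stmt_11
    (n d : ℕ) (hn : 0 < n) (hd : 0 < d)
    (Φ : Matrix (Fin n) (Fin d) ℝ) (hΦ : Φ ≠ 0)
    (ξ : Fin n → ℝ) (hξ : ∀ i, 0 < ξ i)
    (Ξ : Matrix (Fin n) (Fin n) ℝ) (hΞ : Ξ = Matrix.diagonal ξ)
    (P : Matrix (Fin n) (Fin n) ℝ) (r : Fin n → ℝ)
    (T : (Fin n → ℝ) → (Fin n → ℝ)) (hT : ∀ v, T v = r + P.mulVec v)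
    (p : EuclideanSpace ℝ (Fin d) → ℝ)
    (gradp : EuclideanSpace ℝ (Fin d) → EuclideanSpace ℝ (Fin d))
    (hp_conv : ConvexOn ℝ Set.univ p)
    (hp_grad : ∀ θ, HasGradientAt p (gradp θ) θ)
    -- the closed Euclidean ball `B_x` of positive radius centered at the origin
    (rx : ℝ) (hrx : 0 < rx)
    (Bx : Set (EuclideanSpace ℝ (Fin d)))
    (hBx : Bx = Metric.closedBall (0 : EuclideanSpace ℝ (Fin d)) rx)
    -- `ψ^o(θ,x) = ⟨Φx, T v_θ − v_θ⟩_ξ − ½‖Φx‖²_ξ + p(θ)`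
    (ψ : EuclideanSpace ℝ (Fin d) → EuclideanSpace ℝ (Fin d) → ℝ)
    (hψ : ∀ θ x : EuclideanSpace ℝ (Fin d),
      ψ θ x = Φ.mulVec x ⬝ᵥ Ξ.mulVec (T (Φ.mulVec θ) - Φ.mulVec θ)
        - (1 / 2) * (Φ.mulVec x ⬝ᵥ Ξ.mulVec (Φ.mulVec x)) + p θ)
    -- `J̃_p(θ) = sup_{x ∈ B_x} ψ^o(θ, x)`
    (Jt : EuclideanSpace ℝ (Fin d) → ℝ)
    (hJt : ∀ θ : EuclideanSpace ℝ (Fin d), Jt θ = sSup ((fun x => ψ θ x) '' Bx)) :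
    ∃ xt : EuclideanSpace ℝ (Fin d) → EuclideanSpace ℝ (Fin d),
      (∀ θ : EuclideanSpace ℝ (Fin d),
        xt θ ∈ Bx ∧
        (xt θ : Fin d → ℝ) ∈ Submodule.span ℝ (Set.range (fun i : Fin n => Φ i)) ∧
        (∀ x ∈ Bx, ψ θ x ≤ ψ θ (xt θ)) ∧
        (∀ x' : EuclideanSpace ℝ (Fin d), x' ∈ Bx →
          (x' : Fin d → ℝ) ∈ Submodule.span ℝ (Set.range (fun i : Fin n => Φ i)) →
          (∀ x ∈ Bx, ψ θ x ≤ ψ θ x') → x' = xt θ) ∧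
        (∀ xhat : EuclideanSpace ℝ (Fin d), xhat ∈ Bx →
          (∀ x ∈ Bx, ψ θ x ≤ ψ θ xhat) → Φ.mulVec xhat = Φ.mulVec (xt θ))) ∧
      ConvexOn ℝ Set.univ Jt ∧
      (∀ θ : EuclideanSpace ℝ (Fin d),
        HasGradientAt Jt (toEuc ((Φᵀ * Ξ * (P - 1) * Φ)ᵀ.mulVec (xt θ)) + gradp θ) θ) ∧
      Continuous xt := by
  classical
  obtain ⟨C, hC⟩ : ∃ C : Matrix (Fin d) (Fin d) ℝ, C = Φᵀ * Ξ * (P - 1) * Φ := ⟨_, rfl⟩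
  obtain ⟨a, ha⟩ : ∃ a : EuclideanSpace ℝ (Fin d) → EuclideanSpace ℝ (Fin d),
      ∀ θ, a θ = toEuc (Φᵀ.mulVec (Ξ.mulVec r) + C.mulVec θ) := ⟨_, fun θ => rfl⟩
  obtain ⟨Q, hQ⟩ : ∃ Q : EuclideanSpace ℝ (Fin d) → ℝ,
      ∀ x : EuclideanSpace ℝ (Fin d), Q x = Φ.mulVec x ⬝ᵥ Ξ.mulVec (Φ.mulVec x) :=
    ⟨_, fun x => rfl⟩
  -- ψ in canonical form
  have hψ' : ∀ θ x : EuclideanSpace ℝ (Fin d), ψ θ x = ⟪x, a θ⟫ - (1/2) * Q x + p θ := by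
    intro θ x
    rw [hψ, hT, hQ, ha, inner_eq_dot, toEuc_coe]
    congr 2
    rw [dot_mulVec_left]
    congr 1
    have h1 : (r + P.mulVec (Φ.mulVec θ) - Φ.mulVec θ) = r + (P - 1).mulVec (Φ.mulVec θ) := by
      rw [Matrix.sub_mulVec, Matrix.one_mulVec]; abel
    rw [h1, Matrix.mulVec_add, Matrix.mulVec_add, hC,
      Matrix.mulVec_mulVec, Matrix.mulVec_mulVec, Matrix.mulVec_mulVec, Matrix.mulVec_mulVec]
  -- the subspace V'
  obtain ⟨V', hV'⟩ : ∃ V' : Submodule ℝ (EuclideanSpace ℝ (Fin d)),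
      ∀ x : EuclideanSpace ℝ (Fin d), x ∈ V' ↔
        (x : Fin d → ℝ) ∈ Submodule.span ℝ (Set.range (fun i : Fin n => Φ i)) :=
    ⟨(Submodule.span ℝ (Set.range (fun i : Fin n => Φ i))).comap
       ((WithLp.linearEquiv 2 ℝ (Fin d → ℝ) : EuclideanSpace ℝ (Fin d) ≃ₗ[ℝ] (Fin d → ℝ)) :
         EuclideanSpace ℝ (Fin d) →ₗ[ℝ] (Fin d → ℝ)),
     fun x => Iff.rfl⟩
  have hmemV' : ∀ w : Fin n → ℝ, toEuc (Φᵀ.mulVec w) ∈ V' :=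
    fun w => (hV' _).2 (tmul_mem_span Φ w)
  have hrowV' : ∀ i : Fin n, toEuc (Φ i) ∈ V' :=
    fun i => (hV' _).2 (Submodule.subset_span ⟨i, rfl⟩)
  have haV' : ∀ θ, a θ ∈ V' := by
    intro θ
    rw [ha]
    have h1 : Φᵀ.mulVec (Ξ.mulVec r) + C.mulVec (θ : Fin d → ℝ)
        = Φᵀ.mulVec (Ξ.mulVec r + (Ξ * (P - 1) * Φ).mulVec θ) := by
      rw [Matrix.mulVec_add, hC]
      congr 1
      rw [show Φᵀ * Ξ * (P - 1) * Φ = Φᵀ * (Ξ * (P - 1) * Φ) by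
        simp only [Matrix.mul_assoc], ← Matrix.mulVec_mulVec]
    rw [show toEuc (Φᵀ.mulVec (Ξ.mulVec r) + C.mulVec θ)
        = toEuc (Φᵀ.mulVec (Ξ.mulVec r + (Ξ * (P - 1) * Φ).mulVec θ)) from congrArg _ h1]
    exact hmemV' _
  -- orthogonal complement facts
  have horth : ∀ w : EuclideanSpace ℝ (Fin d), w ∈ V'ᗮ → Φ.mulVec w = 0 := by
    intro w hw
    funext i
    have h := (Submodule.mem_orthogonal V' w).1 hw (toEuc (Φ i)) (hrowV' i)
    rw [mulVec_apply_eq_inner, h]; rfl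
  have hker : ∀ x : EuclideanSpace ℝ (Fin d), Φ.mulVec x = 0 → x ∈ V'ᗮ := by
    intro x hx
    have hdot : ∀ u : Fin d → ℝ, u ∈ Submodule.span ℝ (Set.range fun i : Fin n => Φ i) →
        u ⬝ᵥ (x : Fin d → ℝ) = 0 := by
      intro u hu
      induction hu using Submodule.span_induction with
      | mem v hv =>
          obtain ⟨i, rfl⟩ := hv
          have h2 : Φ i ⬝ᵥ (x : Fin d → ℝ) = Φ.mulVec x i := rfl
          rw [h2, hx]; rfl
      | zero => exact zero_dotProduct _
      | add v w _ _ hv hw => rw [add_dotProduct, hv, hw, add_zero]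
      | smul c v _ hv => rw [smul_dotProduct, hv, smul_zero]
    rw [Submodule.mem_orthogonal]
    intro u hu
    rw [inner_eq_dot]
    exact hdot u ((hV' u).1 hu)
  have hVVorth : ∀ z : EuclideanSpace ℝ (Fin d), z ∈ V' → z ∈ V'ᗮ → z = 0 :=
    fun z h1 h2 => Submodule.disjoint_def.1 (Submodule.orthogonal_disjoint V') z h1 h2
  -- Q basic facts
  have hQsum : ∀ x : EuclideanSpace ℝ (Fin d), Q x = ∑ i, ξ i * (Φ.mulVec x i)^2 := by
    intro x
    rw [hQ, hΞ]
    simp [dotProduct, Matrix.mulVec_diagonal]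
    exact Finset.sum_congr rfl (fun i _ => by ring)
  have hQnonneg : ∀ x : EuclideanSpace ℝ (Fin d), 0 ≤ Q x := by
    intro x; rw [hQsum]
    exact Finset.sum_nonneg fun i _ => mul_nonneg (hξ i).le (sq_nonneg _)
  have hQzero : ∀ x : EuclideanSpace ℝ (Fin d), Q x = 0 → Φ.mulVec x = 0 := by
    intro x hx
    rw [hQsum] at hx
    have h := (Finset.sum_eq_zero_iff_of_nonneg
      (fun i _ => mul_nonneg (hξ i).le (sq_nonneg (Φ.mulVec x i)))).1 hx
    funext i
    have hi := h i (Finset.mem_univ i)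
    have := (mul_eq_zero.1 hi).resolve_left (hξ i).ne'
    exact pow_eq_zero_iff (by norm_num) |>.1 this
  have hQ0 : Q 0 = 0 := by
    rw [hQsum]
    refine Finset.sum_eq_zero fun i _ => ?_
    have : Φ.mulVec ((0 : EuclideanSpace ℝ (Fin d)) : Fin d → ℝ) = 0 := Matrix.mulVec_zero Φ
    rw [this]; norm_num
  have hQsmul : ∀ (c : ℝ) (x : EuclideanSpace ℝ (Fin d)), Q (c • x) = c^2 * Q x := by
    intro c x
    rw [hQsum, hQsum, Finset.mul_sum]
    refine Finset.sum_congr rfl fun i _ => ?_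
    rw [mulVec_smul']
    simp only [Pi.smul_apply, smul_eq_mul]
    ring
  have hQneg : ∀ x : EuclideanSpace ℝ (Fin d), Q (-x) = Q x := by
    intro x
    have := hQsmul (-1) x
    rw [neg_one_smul] at this
    rw [this]; ring
  have hQmid : ∀ u y : EuclideanSpace ℝ (Fin d),
      Q ((1/2:ℝ) • u + (1/2:ℝ) • y) = 1/2 * Q u + 1/2 * Q y - 1/4 * Q (u - y) := by
    intro u y
    simp only [hQsum]
    rw [Finset.mul_sum, Finset.mul_sum, Finset.mul_sum, ← Finset.sum_add_distrib,
      ← Finset.sum_sub_distrib]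
    refine Finset.sum_congr rfl fun i _ => ?_
    rw [mulVec_add', mulVec_smul', mulVec_smul', mulVec_sub']
    simp only [Pi.add_apply, Pi.smul_apply, Pi.sub_apply, smul_eq_mul]
    ring
  -- strong positivity on V'
  have hVne : ∃ i0 : Fin n, Φ i0 ≠ 0 := by
    by_contra h
    push_neg at h
    exact hΦ (by ext i j; rw [congrFun (h i) j]; rfl)
  obtain ⟨i0, hi0⟩ := hVne
  have hti0 : toEuc (Φ i0) ≠ (0 : EuclideanSpace ℝ (Fin d)) := by
    intro h
    exact hi0 ((WithLp.equiv 2 (Fin d → ℝ)).symm.injective h)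
  have hSne : ((V' : Set (EuclideanSpace ℝ (Fin d))) ∩ Metric.sphere 0 1).Nonempty := by
    refine ⟨‖toEuc (Φ i0)‖⁻¹ • toEuc (Φ i0), ?_, ?_⟩
    · exact Submodule.smul_mem _ _ (hrowV' i0)
    · simp [norm_smul, norm_ne_zero_iff.2 hti0, abs_of_nonneg,
        inv_mul_cancel₀ (norm_ne_zero_iff.2 hti0)]
  have hScpt : IsCompact ((V' : Set (EuclideanSpace ℝ (Fin d))) ∩ Metric.sphere 0 1) := by
    apply Metric.isCompact_of_isClosed_isBounded
    · exact V'.closed_of_finiteDimensional.inter Metric.isClosed_sphere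
    · exact (Metric.isBounded_sphere).subset Set.inter_subset_right
  have hQcont : Continuous Q := by
    have hfun : Q = fun x => ∑ i, ξ i * (⟪toEuc (Φ i), x⟫)^2 := by
      funext x
      rw [hQsum]
      exact Finset.sum_congr rfl fun i _ => by rw [mulVec_apply_eq_inner]
    rw [hfun]
    exact continuous_finset_sum _ fun i _ =>
      continuous_const.mul ((continuous_const.inner continuous_id).pow 2)
  obtain ⟨v0, hv0S, hv0min⟩ := hScpt.exists_isMinOn hSne hQcont.continuousOn
  have hv0norm : ‖v0‖ = 1 := by
    have := hv0S.2
    rwa [Metric.mem_sphere, dist_zero_right] at this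
  have hμpos : 0 < Q v0 := by
    rcases lt_or_eq_of_le (hQnonneg v0) with h | h
    · exact h
    · exfalso
      have h0 : Φ.mulVec v0 = 0 := hQzero v0 h.symm
      have : v0 = 0 := hVVorth v0 hv0S.1 (hker v0 h0)
      rw [this, norm_zero] at hv0norm
      norm_num at hv0norm
  have hμle : ∀ v : EuclideanSpace ℝ (Fin d), v ∈ V' → Q v0 * ‖v‖^2 ≤ Q v := by
    intro v hv
    by_cases hv0 : v = 0
    · simp [hv0, hQ0]
    · have hnv : (0:ℝ) < ‖v‖ := norm_pos_iff.2 hv0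
      have hu : ‖v‖⁻¹ • v ∈ (V' : Set (EuclideanSpace ℝ (Fin d))) ∩ Metric.sphere 0 1 := by
        refine ⟨Submodule.smul_mem _ _ hv, ?_⟩
        simp [norm_smul, abs_of_nonneg (inv_nonneg.2 hnv.le), inv_mul_cancel₀ hnv.ne']
      have h1 : Q v0 ≤ Q (‖v‖⁻¹ • v) := hv0min hu
      rw [hQsmul] at h1
      have h2 : Q v0 * ‖v‖^2 ≤ ((‖v‖⁻¹)^2 * Q v) * ‖v‖^2 := by nlinarith [sq_nonneg ‖v‖]
      calc Q v0 * ‖v‖^2 ≤ ((‖v‖⁻¹)^2 * Q v) * ‖v‖^2 := h2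
        _ = Q v := by field_simp
  -- the feasible set K
  obtain ⟨K, hK⟩ : ∃ K : Set (EuclideanSpace ℝ (Fin d)),
      K = Bx ∩ (V' : Set (EuclideanSpace ℝ (Fin d))) := ⟨_, rfl⟩
  have hBxcpt : IsCompact Bx := by rw [hBx]; exact isCompact_closedBall _ _
  have hBxconv : Convex ℝ Bx := by rw [hBx]; exact convex_closedBall _ _
  have hKcpt : IsCompact K := by
    rw [hK]; exact hBxcpt.inter_right V'.closed_of_finiteDimensional
  have hKconv : Convex ℝ K := by rw [hK]; exact hBxconv.inter (Submodule.convex V')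
  have h0Bx : (0 : EuclideanSpace ℝ (Fin d)) ∈ Bx := by
    rw [hBx]; exact Metric.mem_closedBall_self hrx.le
  have hKne : K.Nonempty := ⟨0, by rw [hK]; exact ⟨h0Bx, V'.zero_mem⟩⟩
  have hψcont : ∀ θ, Continuous (ψ θ) := by
    intro θ
    have hfun : ψ θ = fun x => ⟪x, a θ⟫ - (1/2) * Q x + p θ := funext (hψ' θ)
    rw [hfun]
    exact ((continuous_id.inner continuous_const).sub (continuous_const.mul hQcont)).add
      continuous_const
  have hex : ∀ θ : EuclideanSpace ℝ (Fin d), ∃ m, m ∈ K ∧ ∀ y ∈ K, ψ θ y ≤ ψ θ m := by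
    intro θ
    obtain ⟨m, hm, hmax⟩ := hKcpt.exists_isMaxOn hKne (hψcont θ).continuousOn
    exact ⟨m, hm, fun y hy => hmax hy⟩
  obtain ⟨xt, hxtspec⟩ : ∃ xt : EuclideanSpace ℝ (Fin d) → EuclideanSpace ℝ (Fin d),
      ∀ θ, xt θ ∈ K ∧ ∀ y ∈ K, ψ θ y ≤ ψ θ (xt θ) :=
    ⟨fun θ => (hex θ).choose, fun θ => (hex θ).choose_spec⟩
  have hxtK : ∀ θ, xt θ ∈ K := fun θ => (hxtspec θ).1
  have hxtmaxK : ∀ θ, ∀ y ∈ K, ψ θ y ≤ ψ θ (xt θ) := fun θ => (hxtspec θ).2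
  have hxtBx : ∀ θ, xt θ ∈ Bx := fun θ => by have := hxtK θ; rw [hK] at this; exact this.1
  have hxtV' : ∀ θ, xt θ ∈ V' := fun θ => by have := hxtK θ; rw [hK] at this; exact this.2
  -- projection onto V' preserves ψ and Φ·
  have hproj : ∀ x ∈ Bx, ∃ v, v ∈ K ∧ (∀ θ, ψ θ v = ψ θ x) ∧ Φ.mulVec v = Φ.mulVec x := by
    intro x hx
    obtain ⟨v, hvV, hveq⟩ : ∃ v : EuclideanSpace ℝ (Fin d), v ∈ V' ∧
        v = (V'.orthogonalProjectionOnto x : EuclideanSpace ℝ (Fin d)) :=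
      ⟨_, (V'.orthogonalProjectionOnto x).2, rfl⟩
    have hw : x - v ∈ V'ᗮ := by
      rw [hveq]; exact Submodule.sub_starProjection_mem_orthogonal (K := V') x
    have hΦw : Φ.mulVec ((x - v : EuclideanSpace ℝ (Fin d)) : Fin d → ℝ) = 0 := horth _ hw
    have hΦeq : Φ.mulVec (v : Fin d → ℝ) = Φ.mulVec (x : Fin d → ℝ) := by
      have h2 := mulVec_sub' Φ x v
      rw [hΦw] at h2
      exact (sub_eq_zero.1 h2.symm).symm
    have hvnorm : ‖v‖ ≤ ‖x‖ := by
      rw [hveq]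
      calc ‖(V'.orthogonalProjectionOnto x : EuclideanSpace ℝ (Fin d))‖
          = ‖V'.orthogonalProjectionOnto x‖ := rfl
        _ ≤ ‖V'.orthogonalProjectionOnto‖ * ‖x‖ := (V'.orthogonalProjectionOnto).le_opNorm x
        _ ≤ 1 * ‖x‖ := by
            exact mul_le_mul_of_nonneg_right (Submodule.orthogonalProjectionOnto_norm_le V') (norm_nonneg x)
        _ = ‖x‖ := one_mul _
    have hvBx : v ∈ Bx := by
      rw [hBx, Metric.mem_closedBall, dist_zero_right]
      rw [hBx, Metric.mem_closedBall, dist_zero_right] at hx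
      exact hvnorm.trans hx
    refine ⟨v, by rw [hK]; exact ⟨hvBx, hvV⟩, ?_, hΦeq⟩
    intro θ
    have hinner : ⟪v, a θ⟫ = ⟪x, a θ⟫ := by
      have h3 : ⟪a θ, x - v⟫ = 0 := (Submodule.mem_orthogonal V' _).1 hw (a θ) (haV' θ)
      have h4 : ⟪x - v, a θ⟫ = 0 := by rw [real_inner_comm]; exact h3
      rw [inner_sub_left] at h4
      linarith
    have hQeq : Q v = Q x := by rw [hQ, hQ, hΦeq]
    rw [hψ', hψ', hinner, hQeq]
  -- maximality over all of Bx
  have hmax : ∀ θ, ∀ x ∈ Bx, ψ θ x ≤ ψ θ (xt θ) := by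
    intro θ x hx
    obtain ⟨v, hvK, hvψ, _⟩ := hproj x hx
    rw [← hvψ θ]
    exact hxtmaxK θ v hvK
  -- strong-concavity stability
  have hstab : ∀ θ, ∀ y ∈ K, ψ θ y + (1/4) * Q (xt θ - y) ≤ ψ θ (xt θ) := by
    intro θ y hy
    have hmK : (1/2:ℝ) • (xt θ) + (1/2:ℝ) • y ∈ K :=
      hKconv (hxtK θ) hy (by norm_num) (by norm_num) (by norm_num)
    have h1 := hxtmaxK θ _ hmK
    have e1 : ψ θ ((1/2:ℝ) • (xt θ) + (1/2:ℝ) • y)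
        = 1/2 * ψ θ (xt θ) + 1/2 * ψ θ y + 1/8 * Q (xt θ - y) := by
      rw [hψ', hψ', hψ', hQmid, inner_add_left, real_inner_smul_left, real_inner_smul_left]
      ring
    rw [e1] at h1
    linarith
  -- uniqueness among maximizers in V'
  have huniq : ∀ θ (x' : EuclideanSpace ℝ (Fin d)), x' ∈ Bx → x' ∈ V' →
      (∀ x ∈ Bx, ψ θ x ≤ ψ θ x') → x' = xt θ := by
    intro θ x' hx'B hx'V hx'max
    have hx'K : x' ∈ K := by rw [hK]; exact ⟨hx'B, hx'V⟩
    have h1 : ψ θ x' = ψ θ (xt θ) :=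
      le_antisymm (hxtmaxK θ x' hx'K) (hx'max _ (hxtBx θ))
    have h2 := hstab θ x' hx'K
    have hQle : Q (xt θ - x') ≤ 0 := by linarith
    have hQeq : Q (xt θ - x') = 0 := le_antisymm hQle (hQnonneg _)
    have hΦ0 := hQzero _ hQeq
    have hz : xt θ - x' = 0 :=
      hVVorth _ (Submodule.sub_mem _ (hxtV' θ) hx'V) (hker _ hΦ0)
    exact (sub_eq_zero.1 hz).symm
  -- every maximizer has the same image under Φ
  have hhat : ∀ θ (xh : EuclideanSpace ℝ (Fin d)), xh ∈ Bx →
      (∀ x ∈ Bx, ψ θ x ≤ ψ θ xh) → Φ.mulVec xh = Φ.mulVec (xt θ) := by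
    intro θ xh hxhB hxhmax
    obtain ⟨v, hvK, hvψ, hvΦ⟩ := hproj xh hxhB
    have hvB : v ∈ Bx := by rw [hK] at hvK; exact hvK.1
    have hvV : v ∈ V' := by rw [hK] at hvK; exact hvK.2
    have hvmax : ∀ x ∈ Bx, ψ θ x ≤ ψ θ v := fun x hx => (hvψ θ).symm ▸ hxhmax x hx
    have heq := huniq θ v hvB hvV hvmax
    rw [← hvΦ, heq]
  -- inner products against a
  have hxa : ∀ (x y : EuclideanSpace ℝ (Fin d)),
      ⟪x, a y⟫ = (x : Fin d → ℝ) ⬝ᵥ (Φᵀ.mulVec (Ξ.mulVec r))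
        + (x : Fin d → ℝ) ⬝ᵥ C.mulVec (y : Fin d → ℝ) := by
    intro x y
    rw [inner_eq_dot, ha, toEuc_coe, dotProduct_add]
  have haff : ∀ (t s : ℝ), t + s = 1 → ∀ (θ₀ θ₁ x : EuclideanSpace ℝ (Fin d)),
      ⟪x, a (t • θ₀ + s • θ₁)⟫ = t * ⟪x, a θ₀⟫ + s * ⟪x, a θ₁⟫ := by
    intro t s hts θ₀ θ₁ x
    rw [hxa, hxa, hxa, mulVec_add' C, mulVec_smul' C, mulVec_smul' C,
      dotProduct_add, dotProduct_smul, dotProduct_smul]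
    simp only [smul_eq_mul]
    linear_combination ((x : Fin d → ℝ) ⬝ᵥ Φᵀ.mulVec (Ξ.mulVec r)) * hts.symm
  have hdiff : ∀ (θ₁ θ₂ x : EuclideanSpace ℝ (Fin d)),
      ⟪x, a θ₁⟫ - ⟪x, a θ₂⟫ = ⟪toEuc (Cᵀ.mulVec x), θ₁ - θ₂⟫ := by
    intro θ₁ θ₂ x
    rw [hxa, hxa, inner_eq_dot, toEuc_coe]
    have h1 : (x : Fin d → ℝ) ⬝ᵥ C.mulVec (θ₁ : Fin d → ℝ)
        - (x : Fin d → ℝ) ⬝ᵥ C.mulVec (θ₂ : Fin d → ℝ)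
        = (x : Fin d → ℝ) ⬝ᵥ C.mulVec ((θ₁ - θ₂ : EuclideanSpace ℝ (Fin d)) : Fin d → ℝ) := by
      rw [mulVec_sub' C, dotProduct_sub]
    have h2 : (x : Fin d → ℝ) ⬝ᵥ C.mulVec ((θ₁ - θ₂ : EuclideanSpace ℝ (Fin d)) : Fin d → ℝ)
        = Cᵀ.mulVec (x : Fin d → ℝ) ⬝ᵥ ((θ₁ - θ₂ : EuclideanSpace ℝ (Fin d)) : Fin d → ℝ) :=
      dot_mulVec_right C _ _
    linarith [h1, h2]
  -- Lipschitz bound for a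
  obtain ⟨Ka, hKa0, hKa⟩ := exists_mulVec_bound C
  have haLip : ∀ θ θ' : EuclideanSpace ℝ (Fin d), ‖a θ - a θ'‖ ≤ Ka * ‖θ - θ'‖ := by
    intro θ θ'
    have h1 : a θ - a θ' = toEuc (C.mulVec θ) - toEuc (C.mulVec θ') := by
      rw [ha, ha, toEuc_sub, toEuc_sub]
      congr 1
      funext j
      simp [Pi.add_apply, Pi.sub_apply]
    rw [h1]
    exact hKa θ θ'
  -- Lipschitz bound for xt
  have hxtLip : ∀ θ θ' : EuclideanSpace ℝ (Fin d),
      ‖xt θ - xt θ'‖ ≤ (2 / Q v0) * ‖a θ - a θ'‖ := by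
    intro θ θ'
    have h1 := hstab θ (xt θ') (hxtK θ')
    have h2 := hstab θ' (xt θ) (hxtK θ)
    have hQflip : Q (xt θ' - xt θ) = Q (xt θ - xt θ') := by
      rw [← hQneg (xt θ - xt θ'), neg_sub]
    rw [hQflip] at h2
    -- expand ψ differences
    have e1 : ψ θ (xt θ) - ψ θ (xt θ') + (ψ θ' (xt θ') - ψ θ' (xt θ))
        = ⟪xt θ - xt θ', a θ - a θ'⟫ := by
      rw [hψ', hψ', hψ', hψ', inner_sub_left, inner_sub_right, inner_sub_right]
      ring
    have h3 : ⟪xt θ - xt θ', a θ - a θ'⟫ ≤ ‖xt θ - xt θ'‖ * ‖a θ - a θ'‖ :=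
      real_inner_le_norm _ _
    have h4 : Q v0 * ‖xt θ - xt θ'‖^2 ≤ Q (xt θ - xt θ') :=
      hμle _ (Submodule.sub_mem _ (hxtV' θ) (hxtV' θ'))
    by_cases hz : ‖xt θ - xt θ'‖ = 0
    · rw [hz]
      positivity
    · have hzp : 0 < ‖xt θ - xt θ'‖ := lt_of_le_of_ne (norm_nonneg _) (Ne.symm hz)
      rw [div_mul_eq_mul_div, le_div_iff₀ hμpos]
      nlinarith [h1, h2, e1, h3, h4, hzp]
  -- Lipschitz continuity of xt
  have hxtLip2 : ∀ θ θ' : EuclideanSpace ℝ (Fin d),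
      ‖xt θ - xt θ'‖ ≤ ((2 / Q v0) * Ka) * ‖θ - θ'‖ := by
    intro θ θ'
    calc ‖xt θ - xt θ'‖ ≤ (2 / Q v0) * ‖a θ - a θ'‖ := hxtLip θ θ'
      _ ≤ (2 / Q v0) * (Ka * ‖θ - θ'‖) :=
          mul_le_mul_of_nonneg_left (haLip θ θ') (by positivity)
      _ = ((2 / Q v0) * Ka) * ‖θ - θ'‖ := by ring
  have hxtcont : Continuous xt := by
    refine LipschitzWith.continuous (K := Real.toNNReal ((2 / Q v0) * Ka)) ?_
    apply LipschitzWith.of_dist_le_mul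
    intro θ θ'
    rw [dist_eq_norm, dist_eq_norm]
    calc ‖xt θ - xt θ'‖ ≤ ((2 / Q v0) * Ka) * ‖θ - θ'‖ := hxtLip2 θ θ'
      _ ≤ (Real.toNNReal ((2 / Q v0) * Ka) : ℝ) * ‖θ - θ'‖ :=
          mul_le_mul_of_nonneg_right (Real.le_coe_toNNReal _) (norm_nonneg _)
  -- the value of Jt
  have hJval : ∀ θ, Jt θ = ψ θ (xt θ) := by
    intro θ
    rw [hJt]
    apply le_antisymm
    · refine csSup_le ⟨ψ θ (xt θ), ⟨xt θ, hxtBx θ, rfl⟩⟩ ?_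
      rintro y ⟨x, hx, rfl⟩
      exact hmax θ x hx
    · refine le_csSup ⟨ψ θ (xt θ), ?_⟩ ⟨xt θ, hxtBx θ, rfl⟩
      rintro y ⟨x, hx, rfl⟩
      exact hmax θ x hx
  -- convexity of Jt
  have hconv : ConvexOn ℝ Set.univ Jt := by
    refine ⟨convex_univ, ?_⟩
    intro θ₀ _ θ₁ _ t s ht hs hts
    simp only [smul_eq_mul]
    rw [hJval, hJval, hJval]
    have hu : xt (t • θ₀ + s • θ₁) ∈ Bx := hxtBx _
    have h1 : ψ (t • θ₀ + s • θ₁) (xt (t • θ₀ + s • θ₁))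
        = t * ψ θ₀ (xt (t • θ₀ + s • θ₁)) + s * ψ θ₁ (xt (t • θ₀ + s • θ₁))
          + (p (t • θ₀ + s • θ₁) - t * p θ₀ - s * p θ₁) := by
      rw [hψ', hψ', hψ', haff t s hts]
      linear_combination ((1/2) * Q (xt (t • θ₀ + s • θ₁))) * hts
    have hpc : p (t • θ₀ + s • θ₁) ≤ t * p θ₀ + s * p θ₁ := by
      have h := hp_conv.2 (Set.mem_univ θ₀) (Set.mem_univ θ₁) ht hs hts
      rwa [smul_eq_mul, smul_eq_mul] at h
    have h2 := mul_le_mul_of_nonneg_left (hmax θ₀ _ hu) ht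
    have h3 := mul_le_mul_of_nonneg_left (hmax θ₁ _ hu) hs
    linarith
  -- gradient of Jt
  obtain ⟨Kc, hKc0, hKc⟩ := exists_mulVec_bound Cᵀ
  have hgradJ : ∀ θ, HasGradientAt Jt (toEuc (Cᵀ.mulVec (xt θ)) + gradp θ) θ := by
    intro θ
    have hg : HasGradientAt (fun θ' => Jt θ' - p θ') (toEuc (Cᵀ.mulVec (xt θ))) θ := by
      rw [hasGradientAt_iff_isLittleO]
      have hlow : ∀ θ' : EuclideanSpace ℝ (Fin d),
          0 ≤ (Jt θ' - p θ') - (Jt θ - p θ) - ⟪toEuc (Cᵀ.mulVec (xt θ)), θ' - θ⟫ := by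
        intro θ'
        have h1 : ψ θ' (xt θ) ≤ ψ θ' (xt θ') := hmax θ' _ (hxtBx θ)
        have h2 : ψ θ' (xt θ) - p θ' - (ψ θ (xt θ) - p θ)
            = ⟪toEuc (Cᵀ.mulVec (xt θ)), θ' - θ⟫ := by
          rw [hψ', hψ']
          linarith [hdiff θ' θ (xt θ)]
        rw [hJval, hJval]
        linarith
      have hup : ∀ θ' : EuclideanSpace ℝ (Fin d),
          (Jt θ' - p θ') - (Jt θ - p θ) - ⟪toEuc (Cᵀ.mulVec (xt θ)), θ' - θ⟫
          ≤ ‖(toEuc (Cᵀ.mulVec (xt θ')) - toEuc (Cᵀ.mulVec (xt θ)) :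
              EuclideanSpace ℝ (Fin d))‖ * ‖θ' - θ‖ := by
        intro θ'
        have h1 : ψ θ (xt θ') ≤ ψ θ (xt θ) := hmax θ _ (hxtBx θ')
        have h2 : ψ θ' (xt θ') - p θ' - (ψ θ (xt θ') - p θ)
            = ⟪toEuc (Cᵀ.mulVec (xt θ')), θ' - θ⟫ := by
          rw [hψ', hψ']
          linarith [hdiff θ' θ (xt θ')]
        have h3 : ⟪toEuc (Cᵀ.mulVec (xt θ')), θ' - θ⟫ - ⟪toEuc (Cᵀ.mulVec (xt θ)), θ' - θ⟫
            = ⟪(toEuc (Cᵀ.mulVec (xt θ')) - toEuc (Cᵀ.mulVec (xt θ)) :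
                EuclideanSpace ℝ (Fin d)), θ' - θ⟫ := (inner_sub_left _ _ _).symm
        have h4 := real_inner_le_norm
          ((toEuc (Cᵀ.mulVec (xt θ')) - toEuc (Cᵀ.mulVec (xt θ)) :
            EuclideanSpace ℝ (Fin d))) (θ' - θ)
        rw [hJval, hJval]
        linarith
      have hboundall : ∀ θ' : EuclideanSpace ℝ (Fin d),
          ‖(Jt θ' - p θ') - (Jt θ - p θ) - ⟪toEuc (Cᵀ.mulVec (xt θ)), θ' - θ⟫‖
          ≤ (Kc * ((2 / Q v0) * Ka)) * (‖θ' - θ‖ * ‖θ' - θ‖) := by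
        intro θ'
        rw [Real.norm_eq_abs, abs_of_nonneg (hlow θ')]
        have h5 := hKc (xt θ') (xt θ)
        have h6 := hxtLip2 θ' θ
        calc (Jt θ' - p θ') - (Jt θ - p θ) - ⟪toEuc (Cᵀ.mulVec (xt θ)), θ' - θ⟫
            ≤ ‖(toEuc (Cᵀ.mulVec (xt θ')) - toEuc (Cᵀ.mulVec (xt θ)) :
                EuclideanSpace ℝ (Fin d))‖ * ‖θ' - θ‖ := hup θ'
          _ ≤ (Kc * ‖xt θ' - xt θ‖) * ‖θ' - θ‖ :=
              mul_le_mul_of_nonneg_right h5 (norm_nonneg _)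
          _ ≤ (Kc * (((2 / Q v0) * Ka) * ‖θ' - θ‖)) * ‖θ' - θ‖ :=
              mul_le_mul_of_nonneg_right
                (mul_le_mul_of_nonneg_left h6 hKc0) (norm_nonneg _)
          _ = (Kc * ((2 / Q v0) * Ka)) * (‖θ' - θ‖ * ‖θ' - θ‖) := by ring
      have hO : (fun θ' => (Jt θ' - p θ') - (Jt θ - p θ) - ⟪toEuc (Cᵀ.mulVec (xt θ)), θ' - θ⟫)
          =O[nhds θ] fun θ' => ‖θ' - θ‖ * ‖θ' - θ‖ := by
        apply Asymptotics.IsBigO.of_bound (Kc * ((2 / Q v0) * Ka))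
        apply Filter.Eventually.of_forall
        intro θ'
        have := hboundall θ'
        rw [Real.norm_of_nonneg (mul_nonneg (norm_nonneg _) (norm_nonneg _))]
        exact this
      have hsq : (fun θ' : EuclideanSpace ℝ (Fin d) => ‖θ' - θ‖ * ‖θ' - θ‖)
          =o[nhds θ] fun θ' => θ' - θ := by
        have h1 : (fun θ' : EuclideanSpace ℝ (Fin d) => ‖θ' - θ‖)
            =o[nhds θ] (fun _ => (1:ℝ)) := by
          rw [Asymptotics.isLittleO_one_iff]
          have hc : Continuous fun θ' : EuclideanSpace ℝ (Fin d) => ‖θ' - θ‖ :=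
            (continuous_id.sub continuous_const).norm
          have h0 : ‖θ - θ‖ = (0:ℝ) := by simp
          have := hc.tendsto θ
          rwa [h0] at this
        have h2 : (fun θ' : EuclideanSpace ℝ (Fin d) => ‖θ' - θ‖)
            =O[nhds θ] fun θ' => ‖θ' - θ‖ := Asymptotics.isBigO_refl _ _
        have h3 := h1.mul_isBigO h2
        simp only [one_mul] at h3
        exact (Asymptotics.isLittleO_norm_right).1 h3
      exact hO.trans_isLittleO hsq
    have hsum := hg.hasFDerivAt.add (hp_grad θ).hasFDerivAt
    have hfin : HasGradientAt (fun θ' => (Jt θ' - p θ') + p θ')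
        (toEuc (Cᵀ.mulVec (xt θ)) + gradp θ) θ := by
      rw [hasGradientAt_iff_hasFDerivAt, map_add]
      exact hsum
    have hfe : (fun θ' => (Jt θ' - p θ') + p θ') = Jt := by
      funext θ'; ring
    rwa [hfe] at hfin
  -- assemble
  refine ⟨xt, fun θ => ⟨hxtBx θ, (hV' _).1 (hxtV' θ), hmax θ,
      fun x' h1 h2 h3 => huniq θ x' h1 ((hV' _).2 h2) h3,
      fun xh h1 h2 => hhat θ xh h1 h2⟩, hconv, ?_, hxtcont⟩
  intro θ
  rw [← hC]
  exact hgradJ θ
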